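/- If an (n−4)-regular graph G on n vertices has an internal partition, then either the complement Ḡ (a cubic graph) has an external bisection, or Ḡ has an independent set of size at least n/2 − 1. -/

import Mathlib

open Finset

open scoped Classical in
noncomputable def degIn {V : Type*} (G : SimpleGraph V) (S : Finset V) (x : V) : ℕ :=
  (S.filter fun y => G.Adj x y).card

open scoped Classical in
lemma degIn_le_card_sub_one {V : Type*} [DecidableEq V] (G : SimpleGraph V) (S : Finset V)
    (x : V) (hx : x ∈ S) : degIn G S x ≤ S.card - 1 := by
  unfold degIn
  have hsub : (S.filter fun y => G.Adj x y) ⊆ S.erase x := by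
    intro y hy
    simp only [Finset.mem_filter] at hy
    exact Finset.mem_erase.2 ⟨fun h => G.loopless.irrefl x (h ▸ hy.2), hy.1⟩
  have := Finset.card_le_card hsub
  simpa [Finset.card_erase_of_mem hx] using this

open scoped Classical in
lemma degIn_add_compl {V : Type*} [Fintype V] [DecidableEq V] (G : SimpleGraph V)
    (S : Finset V) (x : V) :
    degIn G S x + degIn G Sᶜ x = degIn G Finset.univ x := by
  unfold degIn
  have hU : (S.filter fun y => G.Adj x y) ∪ (Sᶜ.filter fun y => G.Adj x y)
      = Finset.univ.filter fun y => G.Adj x y := by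
    ext y
    simp only [Finset.mem_union, Finset.mem_filter, Finset.mem_compl, Finset.mem_univ,
      true_and]
    tauto
  have hD : Disjoint (S.filter fun y => G.Adj x y) (Sᶜ.filter fun y => G.Adj x y) := by
    rw [Finset.disjoint_left]
    intro y h1 h2
    simp only [Finset.mem_filter, Finset.mem_compl] at h1 h2
    exact h2.1 h1.1
  rw [← Finset.card_union_of_disjoint hD, hU]

open scoped Classical in
lemma degIn_univ_eq_degree {V : Type*} [Fintype V] (G : SimpleGraph V)
    [DecidableRel G.Adj] (x : V) : degIn G Finset.univ x = G.degree x := by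
  unfold degIn
  rw [← SimpleGraph.card_neighborFinset_eq_degree]
  congr 1
  ext y
  simp [SimpleGraph.mem_neighborFinset]

open scoped Classical in
lemma degIn_compl_graph {V : Type*} [Fintype V] [DecidableEq V] (G : SimpleGraph V)
    (S : Finset V) (x : V) (hx : x ∉ S) :
    degIn Gᶜ S x = S.card - degIn G S x := by
  unfold degIn
  have hE : (@Finset.filter V (fun y => Gᶜ.Adj x y)
      (fun a => Classical.propDecidable _) S)
      = S.filter fun y => ¬ G.Adj x y := by
    ext y
    simp only [Finset.mem_filter, SimpleGraph.compl_adj, and_congr_right_iff]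
    intro hy
    constructor
    · rintro ⟨-, h2⟩; exact h2
    · intro h2; exact ⟨fun hxy => hx (hxy ▸ hy), h2⟩
  have hsum := Finset.card_filter_add_card_filter_not (s := S)
    (p := fun y => G.Adj x y)
  rw [hE]
  omega

open scoped Classical in
lemma clique_of_degIn {V : Type*} [DecidableEq V] (G : SimpleGraph V) (A : Finset V)
    (hd : ∀ x ∈ A, A.card - 1 ≤ degIn G A x) :
    ∀ x ∈ A, ∀ y ∈ A, x ≠ y → G.Adj x y := by
  intro x hx y hy hxy
  have hsub : (A.filter fun z => G.Adj x z) ⊆ A.erase x := by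
    intro z hz
    simp only [Finset.mem_filter] at hz
    exact Finset.mem_erase.2 ⟨fun h => G.loopless.irrefl x (h ▸ hz.2), hz.1⟩
  have hcard : (A.erase x).card ≤ (A.filter fun z => G.Adj x z).card := by
    rw [Finset.card_erase_of_mem hx]
    exact hd x hx
  have heq := Finset.eq_of_subset_of_card_le hsub hcard
  have hy' : y ∈ (A.filter fun z => G.Adj x z) := by
    rw [heq]; exact Finset.mem_erase.2 ⟨hxy.symm, hy⟩
  exact (Finset.mem_filter.1 hy').2

theorem n_sub_four_regular_internal_partition {V : Type*} [Fintype V] [DecidableEq V]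
    (G : SimpleGraph V) [DecidableRel G.Adj]
    (hreg : G.IsRegularOfDegree (Fintype.card V - 4))
    (h : ∃ A : Finset V, A.Nonempty ∧ Aᶜ.Nonempty ∧
      (∀ x ∈ A, (Fintype.card V - 4) / 2 ≤ degIn G A x) ∧
      (∀ y ∈ Aᶜ, (Fintype.card V - 4) / 2 ≤ degIn G Aᶜ y)) :
    (∃ A : Finset V, 2 * A.card = Fintype.card V ∧
      (∀ x ∈ A, 2 ≤ degIn Gᶜ Aᶜ x) ∧ (∀ y ∈ Aᶜ, 2 ≤ degIn Gᶜ A y)) ∨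
    (∃ S : Finset V, Fintype.card V / 2 - 1 ≤ S.card ∧
      ∀ x ∈ S, ∀ y ∈ S, x ≠ y → ¬ Gᶜ.Adj x y) := by
  classical
  obtain ⟨A, hA, hAc, hInA, hInAc⟩ := h
  set n := Fintype.card V with hn
  -- degree of every vertex in `univ`
  have hdegU : ∀ v, degIn G Finset.univ v = n - 4 := fun v => by
    rw [degIn_univ_eq_degree]; exact hreg v
  by_cases hn5 : n ≤ 5
  · -- small case: a singleton is an independent set of size ≥ n/2 - 1
    right
    obtain ⟨a, ha⟩ := hA
    refine ⟨{a}, ?_, ?_⟩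
    · simp only [Finset.card_singleton]; omega
    · intro x hx y hy hxy
      simp only [Finset.mem_singleton] at hx hy
      exact absurd (hx.trans hy.symm) hxy
  push_neg at hn5
  -- n is even by handshake
  have hmod : n % 2 = 0 := by
    have hsum : ∑ v, G.degree v = 2 * G.edgeFinset.card :=
      SimpleGraph.sum_degrees_eq_twice_card_edges G
    have hsum2 : ∑ v : V, G.degree v = n * (n - 4) := by
      rw [Finset.sum_congr rfl fun v _ => hreg v]
      simp [hn, mul_comm]
    have heven : Even (n * (n - 4)) := ⟨G.edgeFinset.card, by omega⟩
    rcases Nat.even_mul.1 heven with he | he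
    · exact Nat.even_iff.1 he
    · obtain ⟨r, hr⟩ := he; omega
  -- basic cardinality facts
  have hAcard : Aᶜ.card = n - A.card := by rw [Finset.card_compl, hn]
  have hAle : A.card ≤ n := by rw [hn]; exact Finset.card_le_univ A
  obtain ⟨x0, hx0⟩ := hA
  obtain ⟨y0, hy0⟩ := hAc
  have hboundA : ∀ x ∈ A, (n - 4) / 2 ≤ degIn G A x ∧ degIn G A x ≤ A.card - 1 :=
    fun x hx => ⟨hInA x hx, degIn_le_card_sub_one G A x hx⟩
  have hboundAc : ∀ y ∈ Aᶜ, (n - 4) / 2 ≤ degIn G Aᶜ y ∧ degIn G Aᶜ y ≤ Aᶜ.card - 1 :=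
    fun y hy => ⟨hInAc y hy, degIn_le_card_sub_one G Aᶜ y hy⟩
  have hAlow : (n - 4) / 2 ≤ A.card - 1 := le_trans (hboundA x0 hx0).1 (hboundA x0 hx0).2
  have hAclow : (n - 4) / 2 ≤ Aᶜ.card - 1 := le_trans (hboundAc y0 hy0).1 (hboundAc y0 hy0).2
  have hApos : 0 < A.card := Finset.card_pos.2 ⟨x0, hx0⟩
  have hAcpos : 0 < Aᶜ.card := Finset.card_pos.2 ⟨y0, hy0⟩
  -- A.card ∈ {n/2 - 1, n/2, n/2 + 1}
  have htri : A.card = n / 2 - 1 ∨ A.card = n / 2 ∨ A.card = n / 2 + 1 := by omega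
  rcases htri with hcase | hcase | hcase
  · -- A is a clique in G, independent in Gᶜ
    right
    refine ⟨A, by omega, ?_⟩
    intro x hx y hy hxy hadj
    have : G.Adj x y := by
      refine clique_of_degIn G A (fun z hz => ?_) x hx y hy hxy
      have := hboundA z hz
      omega
    rw [SimpleGraph.compl_adj] at hadj
    exact hadj.2 this
  · -- bisection
    left
    refine ⟨A, by omega, ?_, ?_⟩
    · intro x hx
      have hx' : x ∉ Aᶜ := by simp [hx]
      have h1 : degIn Gᶜ Aᶜ x = Aᶜ.card - degIn G Aᶜ x := degIn_compl_graph G Aᶜ x hx'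
      have h2 : degIn G A x + degIn G Aᶜ x = n - 4 := by
        rw [degIn_add_compl]; exact hdegU x
      have h3 := (hboundA x hx).1
      omega
    · intro y hy
      have hy' : y ∉ A := by simpa using hy
      have h1 : degIn Gᶜ A y = A.card - degIn G A y := degIn_compl_graph G A y hy'
      have h2 : degIn G A y + degIn G Aᶜ y = n - 4 := by
        rw [degIn_add_compl]; exact hdegU y
      have h3 := (hboundAc y hy).1
      omega
  · -- Aᶜ is a clique in G
    right
    refine ⟨Aᶜ, by omega, ?_⟩
    intro x hx y hy hxy hadj
    have : G.Adj x y := by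
      refine clique_of_degIn G Aᶜ (fun z hz => ?_) x hx y hy hxy
      have := hboundAc z hz
      omega
    rw [SimpleGraph.compl_adj] at hadj
    exact hadj.2 this
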